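/- Let p, q ∈ [1,∞] with 1/p + 1/q = 1, let F ⊆ [0,1]ⁿ be a nonempty convex compact set, η > 0, α ≥ 1, and let R : ℝⁿ → ℝ be β-strongly convex with respect to the ℓ_p norm on F for some β > 0, with R(f) ≥ 0 for all f ∈ F. Let x₀ = 0 and x₁,…,x_T ∈ [0,1]ⁿ. For t = 1,…,T let f_t ∈ F minimize f ↦ ⟨f, Σ_{s=1}^{t-1} x_s + α x_{t-1}⟩ + R(f)/η over F (the AFTRL iterate) and let g_t ∈ F minimize f ↦ ⟨f, Σ_{s=1}^{t} x_s⟩ + R(f)/η over F. Then for every f' ∈ F: Σ_{t=1}^T ⟨f_t, x_t⟩ − (1/α)⟨f', Σ_{t=1}^T x_t⟩ − ((α−1)/α) Σ_{t=1}^T ⟨g_t, x_t⟩ ≤ R(f')/(ηα) + (ηα/β) Σ_{t=1}^T ‖x_t − x_{t-1}‖_q². -/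

import Mathlib

open scoped BigOperators ENNReal

noncomputable section

/-- The bilinear pairing `⟨a, b⟩ = ∑ i, a i * b i` on `ℝⁿ`. -/
def ip {n : ℕ} (a b : Fin n → ℝ) : ℝ := ∑ i, a i * b i

/-- The `ℓ_p` norm on `ℝⁿ`, for `p ∈ [1, ∞]` (`‖a‖_∞ = max_i |a i|`). -/
def lpNorm {n : ℕ} (p : ℝ≥0∞) (a : Fin n → ℝ) : ℝ :=
  if p = ⊤ then ⨆ i, |a i| else (∑ i, |a i| ^ p.toReal) ^ (1 / p.toReal)

/-- `R` is `β`-strongly convex with respect to the `ℓ_p` norm on the convex set `F`. -/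
def StronglyConvexOnWrt {n : ℕ} (F : Set (Fin n → ℝ)) (β : ℝ) (p : ℝ≥0∞)
    (R : (Fin n → ℝ) → ℝ) : Prop :=
  ∀ a ∈ F, ∀ b ∈ F, ∀ l : ℝ, 0 ≤ l → l ≤ 1 →
    R (l • a + (1 - l) • b) ≤
      l * R a + (1 - l) * R b - β / 2 * l * (1 - l) * (lpNorm p (a - b)) ^ 2

lemma ip_add_right {n : ℕ} (a b c : Fin n → ℝ) : ip a (b + c) = ip a b + ip a c := by
  simp [ip, mul_add, Finset.sum_add_distrib]

lemma ip_smul_right {n : ℕ} (r : ℝ) (a b : Fin n → ℝ) : ip a (r • b) = r * ip a b := by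
  simp only [ip, Pi.smul_apply, smul_eq_mul, Finset.mul_sum]
  exact Finset.sum_congr rfl fun i _ => by ring

lemma ip_zero_right {n : ℕ} (a : Fin n → ℝ) : ip a 0 = 0 := by simp [ip]

lemma ip_sub_left {n : ℕ} (a b c : Fin n → ℝ) : ip (a - b) c = ip a c - ip b c := by
  simp [ip, sub_mul, Finset.sum_sub_distrib]

lemma ip_sub_right {n : ℕ} (a b c : Fin n → ℝ) : ip a (b - c) = ip a b - ip a c := by
  simp [ip, mul_sub, Finset.sum_sub_distrib]

lemma ip_smul_add_left {n : ℕ} (r s : ℝ) (a b c : Fin n → ℝ) :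
    ip (r • a + s • b) c = r * ip a c + s * ip b c := by
  simp only [ip, Pi.add_apply, Pi.smul_apply, smul_eq_mul, add_mul, Finset.sum_add_distrib,
    Finset.mul_sum]
  congr 1 <;> exact Finset.sum_congr rfl fun i _ => by ring

lemma ip_comm {n : ℕ} (a b : Fin n → ℝ) : ip a b = ip b a := by
  simp [ip, mul_comm]

/-- Hölder's inequality for `ip` and `lpNorm`. -/
lemma ip_le_lpNorm_mul_lpNorm {n : ℕ} {p q : ℝ≥0∞} (hp : 1 ≤ p) (hq : 1 ≤ q)
    (hpq : 1 / p + 1 / q = 1) (a b : Fin n → ℝ) :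
    ip a b ≤ lpNorm p a * lpNorm q b := by
  have key : ∀ (a b : Fin n → ℝ), ip a b ≤ lpNorm 1 a * lpNorm ⊤ b := by
    intro a b
    have h1 : lpNorm 1 a = ∑ i, |a i| := by simp [lpNorm]
    have h2 : lpNorm ⊤ b = ⨆ i, |b i| := by simp [lpNorm]
    rw [h1, h2]
    rcases Nat.eq_zero_or_pos n with hn | hn
    · subst hn; simp [ip, Real.iSup_of_isEmpty]
    have hbdd : BddAbove (Set.range fun i => |b i|) := Set.Finite.bddAbove (Set.finite_range _)
    calc ip a b ≤ ∑ i, |a i| * |b i| := by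
          apply Finset.sum_le_sum
          intro i _
          calc a i * b i ≤ |a i * b i| := le_abs_self _
            _ = |a i| * |b i| := abs_mul _ _
      _ ≤ ∑ i, |a i| * (⨆ j, |b j|) := by
          apply Finset.sum_le_sum
          intro i _
          exact mul_le_mul_of_nonneg_left (le_ciSup hbdd i) (abs_nonneg _)
      _ = (∑ i, |a i|) * (⨆ j, |b j|) := by rw [← Finset.sum_mul]
  rcases eq_or_ne p ⊤ with rfl | hpt
  · have hq1 : q = 1 := by simpa using hpq
    subst hq1
    calc ip a b = ip b a := ip_comm a b
      _ ≤ lpNorm 1 b * lpNorm ⊤ a := key b a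
      _ = lpNorm ⊤ a * lpNorm 1 b := mul_comm _ _
  rcases eq_or_ne q ⊤ with rfl | hqt
  · have hp1 : p = 1 := by simpa using hpq
    subst hp1
    exact key a b
  have hp1 : p ≠ 1 := by
    rintro rfl
    simp only [one_div, inv_one] at hpq
    have : q⁻¹ = 0 := by
      have h10 : (1 : ℝ≥0∞) + q⁻¹ = 1 + 0 := by simpa using hpq
      exact (ENNReal.add_right_inj ENNReal.one_ne_top).mp h10
    exact hqt (ENNReal.inv_eq_zero.mp this)
  have hq1 : q ≠ 1 := by
    rintro rfl
    simp only [one_div, inv_one] at hpq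
    have : p⁻¹ = 0 := by
      have h10 : (1 : ℝ≥0∞) + p⁻¹ = 1 + 0 := by simpa [add_comm] using hpq
      exact (ENNReal.add_right_inj ENNReal.one_ne_top).mp h10
    exact hpt (ENNReal.inv_eq_zero.mp this)
  have hp0 : p ≠ 0 := by
    intro h; rw [h] at hp; simp at hp
  have hq0 : q ≠ 0 := by
    intro h; rw [h] at hq; simp at hq
  have hconj : (p.toReal).HolderConjugate (q.toReal) := by
    rw [Real.holderConjugate_iff]
    constructor
    · rw [← ENNReal.toReal_one]
      exact (ENNReal.toReal_lt_toReal ENNReal.one_ne_top hpt).mpr (lt_of_le_of_ne hp (Ne.symm hp1))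
    · have := congrArg ENNReal.toReal hpq
      rw [ENNReal.toReal_add (by simp [ENNReal.div_eq_top, hp0, hpt])
        (by simp [ENNReal.div_eq_top, hq0, hqt]), ENNReal.toReal_div, ENNReal.toReal_div] at this
      simpa using this
  have hfin : lpNorm p a = (∑ i, |a i| ^ p.toReal) ^ (1 / p.toReal) := by
    simp [lpNorm, hpt]
  have hfinq : lpNorm q b = (∑ i, |b i| ^ q.toReal) ^ (1 / q.toReal) := by
    simp [lpNorm, hqt]
  rw [hfin, hfinq]
  exact Real.inner_le_Lp_mul_Lq Finset.univ a b hconj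

/-- A minimizer of `⟨·,v⟩ + R/η` over `F` beats any other point of `F`
by a quadratic margin. -/
lemma min_quadratic_gain {n : ℕ} {F : Set (Fin n → ℝ)} {β η : ℝ} {p : ℝ≥0∞}
    {R : (Fin n → ℝ) → ℝ}
    (hFconv : Convex ℝ F) (hη : 0 < η) (hRsc : StronglyConvexOnWrt F β p R)
    (v u : Fin n → ℝ) (hu : u ∈ F)
    (hopt : ∀ w ∈ F, ip u v + R u / η ≤ ip w v + R w / η)
    (w : Fin n → ℝ) (hw : w ∈ F) :
    ip u v + R u / η + β / (4 * η) * (lpNorm p (u - w)) ^ 2 ≤ ip w v + R w / η := by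
  set N := lpNorm p (u - w) with hN
  have hmidF : (1/2 : ℝ) • u + (1 - 1/2 : ℝ) • w ∈ F := by
    have := hFconv hu hw (by norm_num : (0:ℝ) ≤ 1/2) (by norm_num : (0:ℝ) ≤ 1 - 1/2)
      (by norm_num)
    exact this
  have h1 := hopt _ hmidF
  have h2 : ip ((1/2 : ℝ) • u + (1 - 1/2 : ℝ) • w) v = (1/2) * ip u v + (1/2) * ip w v := by
    rw [ip_smul_add_left]; norm_num
  have h3 := hRsc u hu w hw (1/2) (by norm_num) (by norm_num)
  have h4 : R ((1/2 : ℝ) • u + (1 - 1/2 : ℝ) • w) / η ≤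
      ((1/2) * R u + (1 - 1/2) * R w - β / 2 * (1/2) * (1 - 1/2) * N ^ 2) / η := by
    gcongr
  have h5 : ((1/2) * R u + (1 - 1/2) * R w - β / 2 * (1/2) * (1 - 1/2) * N ^ 2) / η
      = (1/2) * (R u / η) + (1/2) * (R w / η) - (1/2) * (β / (4 * η) * N ^ 2) := by
    field_simp
    ring
  rw [h5] at h4
  linarith [h1, h2 ▸ h1, h4]

/-- **Main regret inequality for AFTRL** (Inequality (4) in the paper).
For every `f' ∈ F`:
`∑_{t=1}^T ⟨f t, x t⟩ - (1/α) ⟨f', ∑_{t=1}^T x t⟩ - ((α-1)/α) ∑_{t=1}^T ⟨g t, x t⟩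
  ≤ R f' / (η α) + (η α / β) ∑_{t=1}^T ‖x t - x (t-1)‖_q²`. -/
theorem aftrl_regret_bound {n T : ℕ} (p q : ℝ≥0∞)
    (hp : 1 ≤ p) (hq : 1 ≤ q) (hpq : 1 / p + 1 / q = 1)
    (F : Set (Fin n → ℝ)) (hF : F.Nonempty) (hFsub : F ⊆ Set.Icc 0 1)
    (hFconv : Convex ℝ F) (hFcomp : IsCompact F)
    (η : ℝ) (hη : 0 < η) (α : ℝ) (hα : 1 ≤ α) (β : ℝ) (hβ : 0 < β)
    (R : (Fin n → ℝ) → ℝ) (hRsc : StronglyConvexOnWrt F β p R)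
    (hRnonneg : ∀ f ∈ F, 0 ≤ R f)
    (x : ℕ → (Fin n → ℝ)) (hx0 : x 0 = 0)
    (hx : ∀ t ∈ Finset.Icc 1 T, x t ∈ Set.Icc (0 : Fin n → ℝ) 1)
    (f g : ℕ → (Fin n → ℝ))
    (hf : ∀ t ∈ Finset.Icc 1 T, f t ∈ F ∧
      ∀ f' ∈ F,
        ip (f t) ((∑ s ∈ Finset.Icc 1 (t - 1), x s) + α • x (t - 1)) + R (f t) / η ≤
        ip f' ((∑ s ∈ Finset.Icc 1 (t - 1), x s) + α • x (t - 1)) + R f' / η)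
    (hg : ∀ t ∈ Finset.Icc 1 T, g t ∈ F ∧
      ∀ f' ∈ F,
        ip (g t) (∑ s ∈ Finset.Icc 1 t, x s) + R (g t) / η ≤
        ip f' (∑ s ∈ Finset.Icc 1 t, x s) + R f' / η) :
    ∀ f' ∈ F,
      (∑ t ∈ Finset.Icc 1 T, ip (f t) (x t)) -
        (1 / α) * ip f' (∑ t ∈ Finset.Icc 1 T, x t) -
        ((α - 1) / α) * ∑ t ∈ Finset.Icc 1 T, ip (g t) (x t) ≤
      R f' / (η * α) +
        η * α / β * ∑ t ∈ Finset.Icc 1 T, (lpNorm q (x t - x (t - 1))) ^ 2 := by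
  intro f' hf'
  have hα0 : (0:ℝ) < α := lt_of_lt_of_le one_pos hα
  have hαne : α ≠ 0 := ne_of_gt hα0
  have hηne : η ≠ 0 := ne_of_gt hη
  have hβne : β ≠ 0 := ne_of_gt hβ
  rcases Nat.eq_zero_or_pos T with rfl | hT1
  · have hempty : Finset.Icc 1 0 = (∅ : Finset ℕ) := Finset.Icc_eq_empty (by omega)
    rw [hempty]
    simp only [Finset.sum_empty, ip_zero_right, mul_zero, sub_zero, add_zero]
    have : 0 ≤ R f' / (η * α) := div_nonneg (hRnonneg f' hf') (by positivity)
    linarith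
  -- Key "be-the-leader"-type induction, interleaving the `f` and `g` iterates.
  have P : ∀ t, t ≤ T → 1 ≤ t →
      (∑ s ∈ Finset.Icc 1 t, ip (g s) (x s))
        + α * (∑ s ∈ Finset.Icc 1 t, ip (f s - g s) (x (s - 1)))
        + β / (4 * η) * (∑ s ∈ Finset.Icc 1 t, (lpNorm p (f s - g s)) ^ 2)
      ≤ ip (g t) (∑ s ∈ Finset.Icc 1 t, x s) + R (g t) / η := by
    intro t
    induction t with
    | zero => intro _ h; omega
    | succ t ih =>
      intro hle _
      rcases Nat.eq_zero_or_pos t with rfl | ht1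
      · -- base case: t + 1 = 1
        have mem1 : 1 ∈ Finset.Icc 1 T := Finset.mem_Icc.mpr ⟨le_rfl, by omega⟩
        have hf1 := hf 1 mem1
        have hg1 := hg 1 mem1
        have hv : (∑ s ∈ Finset.Icc 1 (1 - 1), x s) + α • x (1 - 1) = 0 := by
          rw [show (1:ℕ) - 1 = 0 from rfl, hx0, smul_zero,
            Finset.Icc_eq_empty (by omega : ¬(1:ℕ) ≤ 0), Finset.sum_empty, add_zero]
        have hmq := min_quadratic_gain hFconv hη hRsc _ (f 1) hf1.1 hf1.2 (g 1) hg1.1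
        rw [hv, ip_zero_right, ip_zero_right] at hmq
        have hRf1 : 0 ≤ R (f 1) / η := div_nonneg (hRnonneg _ hf1.1) hη.le
        simp only [Nat.zero_add, Finset.Icc_self, Finset.sum_singleton]
        rw [show (1:ℕ) - 1 = 0 from rfl, hx0, ip_zero_right, mul_zero, add_zero]
        linarith
      · have hle' : t ≤ T := by omega
        have ih' := ih hle' ht1
        have memt : t ∈ Finset.Icc 1 T := Finset.mem_Icc.mpr ⟨ht1, hle'⟩
        have memt1 : t + 1 ∈ Finset.Icc 1 T := Finset.mem_Icc.mpr ⟨by omega, by omega⟩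
        have hft1 := hf (t + 1) memt1
        have hgt1 := hg (t + 1) memt1
        have hgt := hg t memt
        have chain1 := hgt.2 (f (t + 1)) hft1.1
        have hmq := min_quadratic_gain hFconv hη hRsc _ (f (t + 1)) hft1.1 hft1.2
          (g (t + 1)) hgt1.1
        have hvflat : t + 1 - 1 = t := by omega
        rw [hvflat, ip_add_right, ip_add_right, ip_smul_right, ip_smul_right] at hmq
        rw [Finset.sum_Icc_succ_top (by omega : 1 ≤ t + 1),
            Finset.sum_Icc_succ_top (by omega : 1 ≤ t + 1),
            Finset.sum_Icc_succ_top (by omega : 1 ≤ t + 1),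
            Finset.sum_Icc_succ_top (by omega : 1 ≤ t + 1), hvflat, ip_add_right, ip_sub_left]
        linarith
  have memT : T ∈ Finset.Icc 1 T := Finset.mem_Icc.mpr ⟨hT1, le_rfl⟩
  have PT := P T le_rfl hT1
  have gTopt := (hg T memT).2 f' hf'
  -- per-step stability bound via Hölder and AM-GM
  have hstep : ∀ t ∈ Finset.Icc 1 T,
      α * ip (f t - g t) (x t) - α * ip (f t - g t) (x (t - 1)) ≤
        β / (4 * η) * (lpNorm p (f t - g t)) ^ 2
          + η * α ^ 2 / β * (lpNorm q (x t - x (t - 1))) ^ 2 := by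
    intro t _
    set N := lpNorm p (f t - g t) with hNdef
    set W := lpNorm q (x t - x (t - 1)) with hWdef
    have h2 : ip (f t - g t) (x t - x (t - 1)) ≤ N * W :=
      ip_le_lpNorm_mul_lpNorm hp hq hpq _ _
    have h3 : α * (N * W) ≤ β / (4 * η) * N ^ 2 + η * α ^ 2 / β * W ^ 2 := by
      have hkey : α * (N * W) * (4 * η * β) ≤
          (β / (4 * η) * N ^ 2 + η * α ^ 2 / β * W ^ 2) * (4 * η * β) := by
        have e : (β / (4 * η) * N ^ 2 + η * α ^ 2 / β * W ^ 2) * (4 * η * β)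
            = β ^ 2 * N ^ 2 + 4 * η ^ 2 * α ^ 2 * W ^ 2 := by
          field_simp
        rw [e]
        nlinarith [sq_nonneg (β * N - 2 * η * α * W)]
      exact le_of_mul_le_mul_right hkey (by positivity)
    calc α * ip (f t - g t) (x t) - α * ip (f t - g t) (x (t - 1))
        = α * ip (f t - g t) (x t - x (t - 1)) := by rw [ip_sub_right]; ring
      _ ≤ α * (N * W) := mul_le_mul_of_nonneg_left h2 hα0.le
      _ ≤ _ := h3
  have Hsum := Finset.sum_le_sum hstep
  rw [Finset.sum_sub_distrib, Finset.sum_add_distrib, ← Finset.mul_sum, ← Finset.mul_sum,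
    ← Finset.mul_sum, ← Finset.mul_sum] at Hsum
  have hAG : (∑ t ∈ Finset.Icc 1 T, ip (f t - g t) (x t)) =
      (∑ t ∈ Finset.Icc 1 T, ip (f t) (x t)) - (∑ t ∈ Finset.Icc 1 T, ip (g t) (x t)) := by
    rw [← Finset.sum_sub_distrib]
    exact Finset.sum_congr rfl fun t _ => ip_sub_left _ _ _
  rw [hAG] at Hsum
  set A := ∑ t ∈ Finset.Icc 1 T, ip (f t) (x t) with hA
  set G := ∑ t ∈ Finset.Icc 1 T, ip (g t) (x t) with hG
  set C := ip f' (∑ t ∈ Finset.Icc 1 T, x t) with hC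
  set Q := ∑ t ∈ Finset.Icc 1 T, (lpNorm p (f t - g t)) ^ 2 with hQ
  set Ws := ∑ t ∈ Finset.Icc 1 T, (lpNorm q (x t - x (t - 1))) ^ 2 with hWs
  set Xs := ∑ t ∈ Finset.Icc 1 T, ip (f t - g t) (x (t - 1)) with hXs
  -- PT : G + α * Xs + β/(4η) * Q ≤ ip (g T) (∑ x) + R (g T)/η
  -- gTopt : ip (g T) (∑ x) + R (g T)/η ≤ C + R f'/η
  -- Hsum : α * (A - G) - α * Xs ≤ β/(4η) * Q + η α²/β * Ws
  have e1 : α * (A - 1 / α * C - (α - 1) / α * G) = α * A - C - α * G + G := by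
    field_simp
    ring
  have e2 : α * (R f' / (η * α) + η * α / β * Ws) = R f' / η + η * α ^ 2 / β * Ws := by
    field_simp
  have final : α * (A - 1 / α * C - (α - 1) / α * G) ≤
      α * (R f' / (η * α) + η * α / β * Ws) := by
    rw [e1, e2]
    linarith [PT, gTopt, Hsum]
  exact le_of_mul_le_mul_left final hα0
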